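/- Let X be a Banach space and let η be a measure of non-compactness on X*, with constant b > 0 in property (iii). Then the ω-iterated measure η^ω is also a measure of non-compactness on X*, and it satisfies property (iii) with the same constant b. -/

import Mathlib

open Filter Topology Set Pointwise

noncomputable section

namespace Szlenk

variable {E : Type*}

/-- The fragment derivation `[η]'_ε(A)` associated to a set function `η`:
the points of `A` all of whose neighborhoods `U` satisfy `η (A ∩ cl U) ≥ ε`. -/
def frag [TopologicalSpace E] (η : Set E → ℝ) (ε : ℝ) (A : Set E) : Set E :=
  {x | x ∈ A ∧ ∀ U ∈ 𝓝 x, ε ≤ η (A ∩ closure U)}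

/-- Transfinite iterates `[η]^γ_ε(A)` of the fragment derivation. -/
def fragIter [TopologicalSpace E] (η : Set E → ℝ) (ε : ℝ) (A : Set E) (γ : Ordinal.{0}) :
    Set E :=
  Ordinal.limitRecOn γ A (fun _ S => frag η ε S)
    (fun γ _ ih => ⋂ β : {β : Ordinal.{0} // β < γ}, ih β.1 β.2)

/-- The `ω`-iterated measure `η^ω (A) = inf {ε > 0 : [η]^ω_ε(A) = ∅}`. -/
def etaOmega [TopologicalSpace E] (η : Set E → ℝ) (A : Set E) : ℝ :=
  sInf {ε : ℝ | 0 < ε ∧ fragIter η ε A Ordinal.omega0 = ∅}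

/-- The iterates `η^{ω^n}` (with `η^{ω^0} := η` and `η^{ω^{n+1}} := (η^{ω^n})^ω`). -/
def omegaPow [TopologicalSpace E] (η : Set E → ℝ) : ℕ → Set E → ℝ
  | 0 => η
  | n + 1 => etaOmega (omegaPow η n)

/-- `η` is a measure of non compactness (with respect to the closed unit ball `ball`):
it is nonnegative, vanishes on singletons, is monotone, satisfies
`η (A ∪ B) = max (η A) (η B)`, and `η (A + l • ball) ≤ η A + l * b` for some `b > 0`.
All conditions are required on (weak*-)compact sets only. -/
structure IsMNCOn [TopologicalSpace E] [AddCommGroup E] [Module ℝ E]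
    (ball : Set E) (η : Set E → ℝ) : Prop where
  nonneg : ∀ A : Set E, IsCompact A → 0 ≤ η A
  singleton : ∀ x : E, η {x} = 0
  mono : ∀ A B : Set E, IsCompact A → IsCompact B → A ⊆ B → η A ≤ η B
  union : ∀ A B : Set E, IsCompact A → IsCompact B → η (A ∪ B) = max (η A) (η B)
  ball_add : ∃ b > 0, ∀ A : Set E, IsCompact A → ∀ l : ℝ, 0 < l →
    η (A + l • ball) ≤ η A + l * b

/-- `η` is a measure of non compactness with the explicit constant `b` in property (iii). -/
structure IsMNCWith [TopologicalSpace E] [AddCommGroup E] [Module ℝ E]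
    (ball : Set E) (b : ℝ) (η : Set E → ℝ) : Prop where
  b_pos : 0 < b
  nonneg : ∀ A : Set E, IsCompact A → 0 ≤ η A
  singleton : ∀ x : E, η {x} = 0
  mono : ∀ A B : Set E, IsCompact A → IsCompact B → A ⊆ B → η A ≤ η B
  union : ∀ A B : Set E, IsCompact A → IsCompact B → η (A ∪ B) = max (η A) (η B)
  ball_add : ∀ A : Set E, IsCompact A → ∀ l : ℝ, 0 < l →
    η (A + l • ball) ≤ η A + l * b

/-- A sublinear measure of non compactness: homogeneous and subadditive. -/
structure IsSublinear [TopologicalSpace E] [AddCommGroup E] [Module ℝ E]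
    (η : Set E → ℝ) : Prop where
  homog : ∀ (l : ℝ) (A : Set E), IsCompact A → η (l • A) = |l| * η A
  subadd : ∀ A B : Set E, IsCompact A → IsCompact B → η (A + B) ≤ η A + η B

variable {X : Type*} [NormedAddCommGroup X] [NormedSpace ℝ X]

/-- The dual norm on `X*` (the dual being equipped with its weak* topology). -/
def dnorm (f : WeakDual ℝ X) : ℝ := ‖WeakDual.toStrongDual f‖

/-- The closed unit ball of `X*`. -/
def dualBall (X : Type*) [NormedAddCommGroup X] [NormedSpace ℝ X] :
    Set (WeakDual ℝ X) := {f | dnorm f ≤ 1}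

/-- The slice derivation `⟨η⟩'_ε(A)`: the points of `A` such that every weak*-closed
halfspace containing them meets `A` in a set of `η`-measure at least `ε`. -/
def sliceD (η : Set (WeakDual ℝ X) → ℝ) (ε : ℝ) (A : Set (WeakDual ℝ X)) :
    Set (WeakDual ℝ X) :=
  {x | x ∈ A ∧ ∀ (f : X) (c : ℝ), c ≤ x f → ε ≤ η (A ∩ {y | c ≤ y f})}

/-- Transfinite iterates `⟨η⟩^γ_ε(A)` of the slice derivation. -/
def sliceIter (η : Set (WeakDual ℝ X) → ℝ) (ε : ℝ) (A : Set (WeakDual ℝ X))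
    (γ : Ordinal.{0}) : Set (WeakDual ℝ X) :=
  Ordinal.limitRecOn γ A (fun _ S => sliceD η ε S)
    (fun γ _ ih => ⋂ β : {β : Ordinal.{0} // β < γ}, ih β.1 β.2)

/-- A weak*-closed halfspace of `X*`. -/
def IsHalfspace (H : Set (WeakDual ℝ X)) : Prop :=
  ∃ (f : X) (c : ℝ), H = {y : WeakDual ℝ X | c ≤ y f}

/-- The Kuratowski measure of non compactness associated to a (dual) norm `Nd`:
the infimum of all `ε > 0` such that `A` can be covered by finitely many balls of
diameter `ε` (i.e. of radius `ε / 2`). -/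
def kurN (Nd : WeakDual ℝ X → ℝ) (A : Set (WeakDual ℝ X)) : ℝ :=
  sInf {ε : ℝ | 0 < ε ∧
    ∃ F : Finset (WeakDual ℝ X), A ⊆ ⋃ c ∈ F, {y | Nd (y - c) ≤ ε / 2}}

/-- The Kuratowski measure of non compactness on `X*`. -/
def kur (A : Set (WeakDual ℝ X)) : ℝ := kurN dnorm A

/-- The iterated sets `A^ε_β` of the convex Szlenk derivation:
`A^ε_{β+1}` is the weak*-closed convex hull of `[σ]'_ε(A^ε_β)`. -/
def convIter (ε : ℝ) (K : Set (WeakDual ℝ X)) (γ : Ordinal.{0}) : Set (WeakDual ℝ X) :=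
  Ordinal.limitRecOn γ K (fun _ S => closure (convexHull ℝ (frag kur ε S)))
    (fun γ _ ih => ⋂ β : {β : Ordinal.{0} // β < γ}, ih β.1 β.2)

/-- The families `𝒯_α` of trees on `ℕ`. A tree is a set of finite sequences of
naturals (closed under initial segments); the root is the empty sequence, and
`(n)⌢s` is represented by `n :: s`. `𝒯_0 = {{∅}}`, and `T ∈ 𝒯_α` for `α ≥ 1` if
`T = {∅} ∪ ⋃_k (n_k)⌢T_k` with `n_k` strictly increasing, `T_k ∈ 𝒯_{α_k}`, where
`α_k = β` for all `k` if `α = β + 1`, and `α_k ↗ α` if `α` is a limit ordinal. -/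
inductive IsTreeFam : Ordinal.{0} → Set (List ℕ) → Prop
  | zero : IsTreeFam 0 {[]}
  | node {α : Ordinal.{0}} (nk : ℕ → ℕ) (αk : ℕ → Ordinal.{0}) (Tk : ℕ → Set (List ℕ))
      (hnk : StrictMono nk) (hTk : ∀ k, IsTreeFam (αk k) (Tk k))
      (hα : (∃ β, α = β + 1 ∧ ∀ k, αk k = β) ∨
            (Order.IsSuccLimit α ∧ StrictMono αk ∧ α = ⨆ k, αk k)) :
      IsTreeFam α ({[]} ∪ ⋃ k, (List.cons (nk k)) '' Tk k)

/-- A family `(x_s)_{s ∈ T}` is weak*-continuous: `x_{s⌢n} → x_s` (in the ambient,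
i.e. weak*, topology) along the children of every node `s` of `T`. -/
def IsContFam [TopologicalSpace E] (T : Set (List ℕ)) (x : List ℕ → E) : Prop :=
  ∀ s ∈ T, Tendsto (fun n : ℕ => x (s ++ [n]))
    (atTop ⊓ 𝓟 {n : ℕ | s ++ [n] ∈ T}) (𝓝 (x s))

/-- A family `(x_s)_{s ∈ T}` in `X*` is `ε`-separated: `‖x_s - x_{s⌢n}‖ ≥ ε`. -/
def IsSepFam (ε : ℝ) (T : Set (List ℕ)) (x : List ℕ → WeakDual ℝ X) : Prop :=
  ∀ s ∈ T, ∀ n : ℕ, s ++ [n] ∈ T → ε ≤ dnorm (x s - x (s ++ [n]))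

/-- Norm distance from a point of `X*` to a subset of `X*`. -/
def ddist (f : WeakDual ℝ X) (A : Set (WeakDual ℝ X)) : ℝ :=
  sInf ((fun g => dnorm (f - g)) '' A)

/-- The product `η₁ × η₂` of two measures of non compactness. -/
def prodMNC {X₁ X₂ : Type*} [NormedAddCommGroup X₁] [NormedSpace ℝ X₁]
    [NormedAddCommGroup X₂] [NormedSpace ℝ X₂]
    (η₁ : Set (WeakDual ℝ X₁) → ℝ) (η₂ : Set (WeakDual ℝ X₂) → ℝ)
    (A : Set (WeakDual ℝ X₁ × WeakDual ℝ X₂)) : ℝ :=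
  sInf {ε : ℝ | 0 < ε ∧ ∃ (n : ℕ) (A₁ : Fin n → Set (WeakDual ℝ X₁))
      (A₂ : Fin n → Set (WeakDual ℝ X₂)),
      (∀ i, IsCompact (A₁ i) ∧ IsCompact (A₂ i) ∧ η₁ (A₁ i) < ε ∧ η₂ (A₂ i) < ε) ∧
      A ⊆ ⋃ i, A₁ i ×ˢ A₂ i}

/-- The dual norm on `X*` associated to an (equivalent) norm `N` on `X`. -/
def dualNormOf (N : X → ℝ) (f : WeakDual ℝ X) : ℝ :=
  sSup ((fun x => f x) '' {x : X | N x ≤ 1})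

/-- The closed unit ball of the dual norm associated to a norm `N` on `X`. -/
def dualBallOf (N : X → ℝ) : Set (WeakDual ℝ X) :=
  {f : WeakDual ℝ X | ∀ x : X, |f x| ≤ N x}


/-! ### Auxiliary material for `etaOmega_isMNC` -/

section EtaOmegaAux

/-- `ℕ`-indexed iterates of the fragment derivation. -/
def fragN [TopologicalSpace E] (η : Set E → ℝ) (ε : ℝ) (A : Set E) : ℕ → Set E
  | 0 => A
  | n + 1 => frag η ε (fragN η ε A n)

lemma fragIter_natCast [TopologicalSpace E] (η : Set E → ℝ) (ε : ℝ) (A : Set E) (n : ℕ) :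
    fragIter η ε A (n : Ordinal) = fragN η ε A n := by
  induction n with
  | zero =>
    simp only [Nat.cast_zero, fragN]
    exact Ordinal.limitRecOn_zero _ _ _
  | succ n ih =>
    have : ((n + 1 : ℕ) : Ordinal) = (n : Ordinal) + 1 := by push_cast; rfl
    rw [this]
    unfold fragIter
    rw [Ordinal.add_one_eq_succ, Ordinal.limitRecOn_succ]
    exact congrArg (frag η ε) ih

lemma fragIter_omega0 [TopologicalSpace E] (η : Set E → ℝ) (ε : ℝ) (A : Set E) :
    fragIter η ε A Ordinal.omega0 = ⋂ n : ℕ, fragN η ε A n := by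
  unfold fragIter
  rw [Ordinal.limitRecOn_limit _ _ _ _ Ordinal.isSuccLimit_omega0]
  ext x
  simp only [Set.mem_iInter]
  constructor
  · intro h n
    have h2 : x ∈ fragIter η ε A (n : Ordinal) := h ⟨(n : Ordinal), Ordinal.nat_lt_omega0 n⟩
    rwa [fragIter_natCast] at h2
  · rintro h ⟨β, hβ⟩
    obtain ⟨n, rfl⟩ := Ordinal.lt_omega0.1 hβ
    show x ∈ fragIter η ε A (n : Ordinal)
    rw [fragIter_natCast]
    exact h n

lemma frag_subset [TopologicalSpace E] (η : Set E → ℝ) (ε : ℝ) (A : Set E) :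
    frag η ε A ⊆ A := fun _ hx => hx.1

lemma fragN_succ_subset [TopologicalSpace E] (η : Set E → ℝ) (ε : ℝ) (A : Set E) (n : ℕ) :
    fragN η ε A (n + 1) ⊆ fragN η ε A n := frag_subset _ _ _

lemma fragN_antitone [TopologicalSpace E] (η : Set E → ℝ) (ε : ℝ) (A : Set E) :
    Antitone (fragN η ε A) :=
  antitone_nat_of_succ_le (fragN_succ_subset η ε A)

lemma fragN_subset [TopologicalSpace E] (η : Set E → ℝ) (ε : ℝ) (A : Set E) (n : ℕ) :
    fragN η ε A n ⊆ A :=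
  fragN_antitone η ε A (Nat.zero_le n)

variable {X : Type*} [NormedAddCommGroup X] [NormedSpace ℝ X] [CompleteSpace X]
variable {b : ℝ} {η : Set (WeakDual ℝ X) → ℝ}

lemma isCompact_dualBall : IsCompact (dualBall X) := by
  have h : dualBall X = WeakDual.toStrongDual ⁻¹' Metric.closedBall 0 1 := by
    ext f
    simp [dualBall, dnorm, Metric.mem_closedBall, dist_zero_right]
  rw [h]
  exact WeakDual.isCompact_closedBall (0 : StrongDual ℝ X) 1

lemma isCompact_smul_dualBall (l : ℝ) : IsCompact (l • dualBall X) :=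
  IsCompact.smul l isCompact_dualBall

lemma eta_empty (hη : IsMNCWith (dualBall X) b η) : η (∅ : Set (WeakDual ℝ X)) = 0 :=
  le_antisymm
    (by simpa [hη.singleton (0 : WeakDual ℝ X)] using
      hη.mono ∅ {0} isCompact_empty isCompact_singleton (Set.empty_subset _))
    (hη.nonneg ∅ isCompact_empty)

lemma frag_isClosed (hη : IsMNCWith (dualBall X) b η) {ε : ℝ} {A : Set (WeakDual ℝ X)}
    (hA : IsCompact A) : IsClosed (frag η ε A) := by
  rw [← isOpen_compl_iff, isOpen_iff_mem_nhds]
  intro x hx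
  by_cases hxA : x ∈ A
  · have h : ¬ ∀ U ∈ 𝓝 x, ε ≤ η (A ∩ closure U) := fun h => hx ⟨hxA, h⟩
    push_neg at h
    obtain ⟨U, hU, hUlt⟩ := h
    refine Filter.mem_of_superset (interior_mem_nhds.2 hU) fun y hy hyf => ?_
    have h1 := hyf.2 (interior U) (isOpen_interior.mem_nhds hy)
    have h2 : η (A ∩ closure (interior U)) ≤ η (A ∩ closure U) :=
      hη.mono _ _ (hA.inter_right isClosed_closure) (hA.inter_right isClosed_closure)
        (Set.inter_subset_inter_right _ (closure_mono interior_subset))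
    linarith
  · exact Filter.mem_of_superset (hA.isClosed.isOpen_compl.mem_nhds hxA)
      fun y hy hyf => hy hyf.1

lemma frag_isCompact (hη : IsMNCWith (dualBall X) b η) {ε : ℝ} {A : Set (WeakDual ℝ X)}
    (hA : IsCompact A) : IsCompact (frag η ε A) :=
  hA.of_isClosed_subset (frag_isClosed hη hA) (frag_subset _ _ _)

lemma frag_mono (hη : IsMNCWith (dualBall X) b η) {ε : ℝ} {A B : Set (WeakDual ℝ X)}
    (hA : IsCompact A) (hB : IsCompact B) (hAB : A ⊆ B) : frag η ε A ⊆ frag η ε B := by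
  rintro x ⟨hxA, hx⟩
  refine ⟨hAB hxA, fun U hU => (hx U hU).trans ?_⟩
  exact hη.mono _ _ (hA.inter_right isClosed_closure) (hB.inter_right isClosed_closure)
    (Set.inter_subset_inter_left _ hAB)

lemma frag_anti_eps {ε ε' : ℝ} (h : ε ≤ ε') (A : Set (WeakDual ℝ X)) :
    frag η ε' A ⊆ frag η ε A :=
  fun _ hx => ⟨hx.1, fun U hU => h.trans (hx.2 U hU)⟩

lemma frag_empty (hη : IsMNCWith (dualBall X) b η) {ε : ℝ} {A : Set (WeakDual ℝ X)}
    (hA : IsCompact A) (h : η A < ε) : frag η ε A = ∅ := by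
  rw [Set.eq_empty_iff_forall_notMem]
  rintro x ⟨hxA, hx⟩
  have h1 := hx Set.univ Filter.univ_mem
  rw [closure_univ, Set.inter_univ] at h1
  linarith

lemma exists_closed_nhds_of_not_frag (hη : IsMNCWith (dualBall X) b η) {ε : ℝ}
    {C : Set (WeakDual ℝ X)} {x : WeakDual ℝ X} (hε : 0 < ε) (hC : IsCompact C)
    (hx : x ∉ frag η ε C) : ∃ V ∈ 𝓝 x, IsClosed V ∧ η (C ∩ V) < ε := by
  by_cases hxC : x ∈ C
  · have h : ¬ ∀ U ∈ 𝓝 x, ε ≤ η (C ∩ closure U) := fun h => hx ⟨hxC, h⟩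
    push_neg at h
    obtain ⟨U, hU, hlt⟩ := h
    exact ⟨closure U, Filter.mem_of_superset hU subset_closure, isClosed_closure, hlt⟩
  · obtain ⟨V, hV, hVc, hVsub⟩ :=
      exists_mem_nhds_isClosed_subset (hC.isClosed.isOpen_compl.mem_nhds hxC)
    refine ⟨V, hV, hVc, ?_⟩
    have h : C ∩ V = ∅ := by
      rw [Set.eq_empty_iff_forall_notMem]
      rintro y ⟨h1, h2⟩
      exact hVsub h2 h1
    rw [h, eta_empty hη]
    exact hε

lemma frag_union_subset (hη : IsMNCWith (dualBall X) b η) {ε : ℝ} {A B : Set (WeakDual ℝ X)}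
    (hε : 0 < ε) (hA : IsCompact A) (hB : IsCompact B) :
    frag η ε (A ∪ B) ⊆ frag η ε A ∪ frag η ε B := by
  intro x hx
  by_contra hx'
  rw [Set.mem_union] at hx'
  push_neg at hx'
  obtain ⟨V, hV, hVc, hVlt⟩ := exists_closed_nhds_of_not_frag hη hε hA hx'.1
  obtain ⟨V', hV', hVc', hVlt'⟩ := exists_closed_nhds_of_not_frag hη hε hB hx'.2
  have h2 := hx.2 (V ∩ V') (Filter.inter_mem hV hV')
  rw [(hVc.inter hVc').closure_eq] at h2
  have hd : (A ∪ B) ∩ (V ∩ V') = (A ∩ (V ∩ V')) ∪ (B ∩ (V ∩ V')) :=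
    Set.union_inter_distrib_right _ _ _
  rw [hd, hη.union _ _ (hA.inter_right (hVc.inter hVc')) (hB.inter_right (hVc.inter hVc'))] at h2
  have h3 : η (A ∩ (V ∩ V')) ≤ η (A ∩ V) :=
    hη.mono _ _ (hA.inter_right (hVc.inter hVc')) (hA.inter_right hVc)
      (Set.inter_subset_inter_right _ Set.inter_subset_left)
  have h4 : η (B ∩ (V ∩ V')) ≤ η (B ∩ V') :=
    hη.mono _ _ (hB.inter_right (hVc.inter hVc')) (hB.inter_right hVc')
      (Set.inter_subset_inter_right _ Set.inter_subset_right)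
  rcases max_cases (η (A ∩ (V ∩ V'))) (η (B ∩ (V ∩ V'))) with ⟨he, _⟩ | ⟨he, _⟩ <;>
    rw [he] at h2 <;> linarith

lemma eta_biUnion_lt (hη : IsMNCWith (dualBall X) b η) {ι : Type*} [DecidableEq ι]
    (t : Finset ι) (S : ι → Set (WeakDual ℝ X)) {c : ℝ} (hc : 0 < c)
    (hS : ∀ a ∈ t, IsCompact (S a)) (hlt : ∀ a ∈ t, η (S a) < c) :
    η (⋃ a ∈ t, S a) < c := by
  induction t using Finset.induction with
  | empty => simpa [eta_empty hη] using hc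
  | @insert a s ha ih =>
    rw [Finset.set_biUnion_insert,
      hη.union _ _ (hS a (Finset.mem_insert_self a s))
        (s.isCompact_biUnion fun i hi => hS i (Finset.mem_insert_of_mem hi))]
    exact max_lt (hlt a (Finset.mem_insert_self a s))
      (ih (fun i hi => hS i (Finset.mem_insert_of_mem hi))
        (fun i hi => hlt i (Finset.mem_insert_of_mem hi)))

lemma frag_add_smulBall (hη : IsMNCWith (dualBall X) b η) {ε l : ℝ} (hε : 0 < ε) (hl : 0 < l)
    {A : Set (WeakDual ℝ X)} (hA : IsCompact A) :
    frag η (ε + l * b) (A + l • dualBall X) ⊆ frag η ε A + l • dualBall X := by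
  classical
  set B : Set (WeakDual ℝ X) := l • dualBall X with hBdef
  have hBc : IsCompact B := isCompact_smul_dualBall l
  intro x hx
  by_contra hxn
  set C : Set (WeakDual ℝ X) := A ∩ ((fun v => x - v) '' B) with hCdef
  have hCc : IsCompact C :=
    hA.inter (hBc.image (continuous_const.sub continuous_id))
  have hCnot : ∀ a ∈ C, a ∉ frag η ε A := by
    rintro a ⟨haA, v, hvB, hav⟩ hafrag
    have hav' : x - v = a := hav
    refine hxn ⟨a, hafrag, v, hvB, ?_⟩
    show a + v = x
    rw [← hav']; abel
  choose V hV hVcl hVlt using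
    fun a : C => exists_closed_nhds_of_not_frag hη hε hA (hCnot a.1 a.2)
  obtain ⟨t, ht⟩ := hCc.elim_finite_subcover (fun a : C => interior (V a))
    (fun _ => isOpen_interior)
    (fun a haC => Set.mem_iUnion.2 ⟨⟨a, haC⟩, mem_interior_iff_mem_nhds.2 (hV ⟨a, haC⟩)⟩)
  set W : Set (WeakDual ℝ X) := ⋃ a ∈ t, interior (V a) with hWdef
  have hWo : IsOpen W := isOpen_biUnion fun _ _ => isOpen_interior
  have hCW : C ⊆ W := fun a haC => by
    obtain ⟨i, hi⟩ := Set.mem_iUnion.1 (ht haC)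
    obtain ⟨hit, hai⟩ := Set.mem_iUnion.1 hi
    exact Set.mem_biUnion hit hai
  set D : Set (WeakDual ℝ X) := A \ W with hDdef
  have hDc : IsCompact D := hA.diff hWo
  have hxD : x ∉ D + B := by
    rintro ⟨d, hd, v, hv, hdv⟩
    have hdv' : d + v = x := hdv
    refine hd.2 (hCW ⟨hd.1, v, hv, ?_⟩)
    show x - v = d
    rw [← hdv']; abel
  obtain ⟨N, hN, hNcl, hNsub⟩ :=
    exists_mem_nhds_isClosed_subset ((hDc.add hBc).isClosed.isOpen_compl.mem_nhds hxD)
  have hsub : (A + B) ∩ N ⊆ ⋃ a ∈ t, ((A ∩ V a) + B) := by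
    rintro y ⟨⟨a, haA, v, hvB, hav⟩, hyN⟩
    have haW : a ∈ W := by
      by_contra haW
      exact hNsub hyN ⟨a, ⟨haA, haW⟩, v, hvB, hav⟩
    obtain ⟨i, hi⟩ := Set.mem_iUnion.1 haW
    obtain ⟨hit, hai⟩ := Set.mem_iUnion.1 hi
    exact Set.mem_biUnion hit ⟨a, ⟨haA, interior_subset hai⟩, v, hvB, hav⟩
  have hUlt : η (⋃ a ∈ t, ((A ∩ V a) + B)) < ε + l * b := by
    refine eta_biUnion_lt hη t _ (by have hb := hη.b_pos; positivity) (fun a _ => (hA.inter_right (hVcl a)).add hBc)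
      fun a _ => lt_of_le_of_lt (hη.ball_add _ (hA.inter_right (hVcl a)) l hl) ?_
    have := hVlt a
    linarith
  have hfrag := hx.2 N hN
  rw [hNcl.closure_eq] at hfrag
  have hmon : η ((A + B) ∩ N) ≤ η (⋃ a ∈ t, ((A ∩ V a) + B)) :=
    hη.mono _ _ ((hA.add hBc).inter_right hNcl)
      (t.isCompact_biUnion fun a _ => (hA.inter_right (hVcl a)).add hBc) hsub
  linarith

lemma fragN_isCompact (hη : IsMNCWith (dualBall X) b η) {ε : ℝ} {A : Set (WeakDual ℝ X)}
    (hA : IsCompact A) (n : ℕ) : IsCompact (fragN η ε A n) := by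
  induction n with
  | zero => exact hA
  | succ n ih => exact frag_isCompact hη ih

lemma fragN_mono (hη : IsMNCWith (dualBall X) b η) {ε : ℝ} {A B : Set (WeakDual ℝ X)}
    (hA : IsCompact A) (hB : IsCompact B) (hAB : A ⊆ B) (n : ℕ) :
    fragN η ε A n ⊆ fragN η ε B n := by
  induction n with
  | zero => exact hAB
  | succ n ih => exact frag_mono hη (fragN_isCompact hη hA n) (fragN_isCompact hη hB n) ih

lemma fragN_anti_eps (hη : IsMNCWith (dualBall X) b η) {ε ε' : ℝ} {A : Set (WeakDual ℝ X)}
    (hA : IsCompact A) (h : ε ≤ ε') (n : ℕ) : fragN η ε' A n ⊆ fragN η ε A n := by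
  induction n with
  | zero => exact subset_rfl
  | succ n ih =>
    exact (frag_mono hη (fragN_isCompact hη hA n) (fragN_isCompact hη hA n) ih).trans
      (frag_anti_eps h _)

lemma fragN_union (hη : IsMNCWith (dualBall X) b η) {ε : ℝ} {A B : Set (WeakDual ℝ X)}
    (hε : 0 < ε) (hA : IsCompact A) (hB : IsCompact B) (n : ℕ) :
    fragN η ε (A ∪ B) n ⊆ fragN η ε A n ∪ fragN η ε B n := by
  induction n with
  | zero => exact subset_rfl
  | succ n ih =>
    refine (frag_mono hη (fragN_isCompact hη (hA.union hB) n)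
      ((fragN_isCompact hη hA n).union (fragN_isCompact hη hB n)) ih).trans ?_
    exact frag_union_subset hη hε (fragN_isCompact hη hA n) (fragN_isCompact hη hB n)

lemma fragN_add_smulBall (hη : IsMNCWith (dualBall X) b η) {ε l : ℝ} (hε : 0 < ε) (hl : 0 < l)
    {A : Set (WeakDual ℝ X)} (hA : IsCompact A) (n : ℕ) :
    fragN η (ε + l * b) (A + l • dualBall X) n ⊆ fragN η ε A n + l • dualBall X := by
  induction n with
  | zero => exact subset_rfl
  | succ n ih =>
    refine (frag_mono hη (fragN_isCompact hη (hA.add (isCompact_smul_dualBall l)) n)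
      ((fragN_isCompact hη hA n).add (isCompact_smul_dualBall l)) ih).trans ?_
    exact frag_add_smulBall hη hε hl (fragN_isCompact hη hA n)

lemma iInter_union_subset_of_antitone {α : Type*} {C D : ℕ → Set α}
    (hC : Antitone C) (hD : Antitone D) :
    (⋂ n, C n ∪ D n) ⊆ (⋂ n, C n) ∪ ⋂ n, D n := by
  intro x hx
  simp only [Set.mem_iInter, Set.mem_union] at hx ⊢
  by_cases h : ∀ n, x ∈ C n
  · exact Or.inl h
  · push_neg at h
    obtain ⟨n, hn⟩ := h
    refine Or.inr fun m => ?_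
    rcases hx (max n m) with h' | h'
    · exact absurd (hC (le_max_left n m) h') hn
    · exact hD (le_max_right n m) h'

lemma iInter_add_subset {C : ℕ → Set (WeakDual ℝ X)} {B : Set (WeakDual ℝ X)}
    (hC : Antitone C) (hCc : ∀ n, IsCompact (C n)) (hBc : IsCompact B) :
    (⋂ n, C n + B) ⊆ (⋂ n, C n) + B := by
  intro x hx
  simp only [Set.mem_iInter] at hx
  set S : ℕ → Set (WeakDual ℝ X) := fun n => C n ∩ ((fun v => x - v) '' B) with hSdef
  have hIm : IsCompact ((fun v : WeakDual ℝ X => x - v) '' B) :=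
    hBc.image (continuous_const.sub continuous_id)
  have hSn : ∀ n, (S n).Nonempty := by
    intro n
    obtain ⟨c, hc, v, hv, hcv⟩ := hx n
    have hcv' : c + v = x := hcv
    refine ⟨c, hc, v, hv, ?_⟩
    show x - v = c
    rw [← hcv']; abel
  obtain ⟨c, hc⟩ := IsCompact.nonempty_iInter_of_sequence_nonempty_isCompact_isClosed S
    (fun n => Set.inter_subset_inter_left _ (hC (Nat.le_succ n))) hSn
    ((hCc 0).inter hIm) (fun n => ((hCc n).inter hIm).isClosed)
  simp only [Set.mem_iInter] at hc
  obtain ⟨v, hv, hcv⟩ := (hc 0).2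
  have hcv' : x - v = c := hcv
  refine ⟨c, Set.mem_iInter.2 fun n => (hc n).1, v, hv, ?_⟩
  show c + v = x
  rw [← hcv']; abel

/-- The defining set of `etaOmega`, expressed with `ℕ`-indexed iterates. -/
def sset (η : Set (WeakDual ℝ X) → ℝ) (A : Set (WeakDual ℝ X)) : Set ℝ :=
  {ε : ℝ | 0 < ε ∧ ⋂ n : ℕ, fragN η ε A n = ∅}

lemma etaOmega_eq (η : Set (WeakDual ℝ X) → ℝ) (A : Set (WeakDual ℝ X)) :
    etaOmega η A = sInf (sset η A) := by
  unfold etaOmega sset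
  simp only [fragIter_omega0]

lemma sset_bddBelow (η : Set (WeakDual ℝ X) → ℝ) (A : Set (WeakDual ℝ X)) :
    BddBelow (sset η A) :=
  ⟨0, fun _ hε => hε.1.le⟩

lemma sset_nonempty (hη : IsMNCWith (dualBall X) b η) {A : Set (WeakDual ℝ X)}
    (hA : IsCompact A) : (sset η A).Nonempty := by
  refine ⟨η A + 1, by linarith [hη.nonneg A hA], ?_⟩
  have h1 : fragN η (η A + 1) A 1 = ∅ := by
    show frag η (η A + 1) A = ∅
    exact frag_empty hη hA (by linarith)
  exact Set.subset_eq_empty (Set.iInter_subset _ 1) h1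

lemma sset_upward (hη : IsMNCWith (dualBall X) b η) {A : Set (WeakDual ℝ X)}
    (hA : IsCompact A) {ε ε' : ℝ} (hε : ε ∈ sset η A) (h : ε ≤ ε') : ε' ∈ sset η A :=
  ⟨lt_of_lt_of_le hε.1 h,
    Set.subset_eq_empty (Set.iInter_mono fun n => fragN_anti_eps hη hA h n) hε.2⟩

lemma sset_mem_of_lt (hη : IsMNCWith (dualBall X) b η) {A : Set (WeakDual ℝ X)}
    (hA : IsCompact A) {c : ℝ} (h : etaOmega η A < c) : c ∈ sset η A := by
  rw [etaOmega_eq] at h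
  obtain ⟨ε, hε, hlt⟩ := exists_lt_of_csInf_lt (sset_nonempty hη hA) h
  exact sset_upward hη hA hε hlt.le

lemma etaOmega_nonneg' (η : Set (WeakDual ℝ X) → ℝ) (A : Set (WeakDual ℝ X)) :
    0 ≤ etaOmega η A := by
  rw [etaOmega_eq]
  exact Real.sInf_nonneg fun ε hε => hε.1.le

lemma etaOmega_mono (hη : IsMNCWith (dualBall X) b η) {A B : Set (WeakDual ℝ X)}
    (hA : IsCompact A) (hB : IsCompact B) (hAB : A ⊆ B) : etaOmega η A ≤ etaOmega η B := by
  rw [etaOmega_eq, etaOmega_eq]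
  refine csInf_le_csInf (sset_bddBelow η A) (sset_nonempty hη hB) fun ε hε => ?_
  exact ⟨hε.1, Set.subset_eq_empty (Set.iInter_mono fun n => fragN_mono hη hA hB hAB n) hε.2⟩

lemma le_add_of_forall_pos {a c : ℝ} (h : ∀ δ : ℝ, 0 < δ → a ≤ c + δ) : a ≤ c := by
  by_contra hac
  push_neg at hac
  have := h ((a - c) / 2) (by linarith)
  linarith

end EtaOmegaAux

/-- If `η` is a measure of non compactness on `X*`, with constant `b > 0` in
property (iii), then the `ω`-iterated measure `η^ω` is also a measure of non
compactness on `X*`, with the same constant `b`. -/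
theorem etaOmega_isMNC
    {X : Type*} [NormedAddCommGroup X] [NormedSpace ℝ X] [CompleteSpace X]
    (b : ℝ) (η : Set (WeakDual ℝ X) → ℝ)
    (hη : IsMNCWith (dualBall X) b η) :
    IsMNCWith (dualBall X) b (etaOmega η) := by
  refine ⟨hη.b_pos, fun A hA => etaOmega_nonneg' η A, ?_, fun A B hA hB hAB =>
    etaOmega_mono hη hA hB hAB, ?_, ?_⟩
  · -- singleton
    intro x
    rw [etaOmega_eq]
    have hset : sset η {x} = Set.Ioi 0 := by
      ext ε
      simp only [sset, Set.mem_setOf_eq, Set.mem_Ioi, and_iff_left_iff_imp]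
      intro hε
      have h1 : fragN η ε {x} 1 = ∅ := by
        show frag η ε {x} = ∅
        refine frag_empty hη isCompact_singleton ?_
        rw [hη.singleton]
        exact hε
      exact Set.subset_eq_empty (Set.iInter_subset _ 1) h1
    rw [hset, csInf_Ioi]
  · -- union
    intro A B hA hB
    refine le_antisymm (le_add_of_forall_pos fun δ hδ => ?_)
      (max_le (etaOmega_mono hη hA (hA.union hB) Set.subset_union_left)
        (etaOmega_mono hη hB (hA.union hB) Set.subset_union_right))
    set m := max (etaOmega η A) (etaOmega η B) with hm
    have hm0 : 0 ≤ m := le_trans (etaOmega_nonneg' η A) (le_max_left _ _)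
    have hmA : m + δ ∈ sset η A :=
      sset_mem_of_lt hη hA (lt_of_le_of_lt (le_max_left _ _) (by linarith))
    have hmB : m + δ ∈ sset η B :=
      sset_mem_of_lt hη hB (lt_of_le_of_lt (le_max_right _ _) (by linarith))
    have hmem : m + δ ∈ sset η (A ∪ B) := by
      refine ⟨by linarith, ?_⟩
      have h1 : (⋂ n : ℕ, fragN η (m + δ) (A ∪ B) n) ⊆
          (⋂ n : ℕ, fragN η (m + δ) A n) ∪ ⋂ n : ℕ, fragN η (m + δ) B n := by
        refine (Set.iInter_mono fun n => fragN_union hη (by linarith) hA hB n).trans ?_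
        exact iInter_union_subset_of_antitone (fragN_antitone η _ A) (fragN_antitone η _ B)
      rw [hmA.2, hmB.2, Set.union_empty] at h1
      exact Set.subset_eq_empty h1 rfl
    rw [etaOmega_eq]
    exact csInf_le (sset_bddBelow η _) hmem
  · -- ball_add
    intro A hA l hl
    refine le_add_of_forall_pos fun δ hδ => ?_
    set ε := etaOmega η A + δ with hεdef
    have hεA : ε ∈ sset η A := sset_mem_of_lt hη hA (by rw [hεdef]; linarith)
    have hε : 0 < ε := hεA.1
    have hmem : ε + l * b ∈ sset η (A + l • dualBall X) := by
      refine ⟨by nlinarith [hη.b_pos], ?_⟩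
      have h1 : (⋂ n : ℕ, fragN η (ε + l * b) (A + l • dualBall X) n) ⊆
          (⋂ n : ℕ, fragN η ε A n) + l • dualBall X := by
        refine (Set.iInter_mono fun n => fragN_add_smulBall hη hε hl hA n).trans ?_
        exact iInter_add_subset (fragN_antitone η ε A) (fragN_isCompact hη hA)
          (isCompact_smul_dualBall l)
      rw [hεA.2, Set.empty_add] at h1
      exact Set.subset_eq_empty h1 rfl
    have h1 : etaOmega η (A + l • dualBall X) ≤ ε + l * b := by
      rw [etaOmega_eq]
      exact csInf_le (sset_bddBelow η _) hmem
    rw [hεdef] at h1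
    linarith

end Szlenk
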